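/- If A is a normal subgroup of a finite group G and H is a π-Hall subgroup of G, then H ∩ A is a π-Hall subgroup of A. -/

import Mathlib

/-- `H` is a π-Hall subgroup: every prime dividing `|H|` lies in `π` and
no prime dividing the index `|G : H|` lies in `π`. -/
def IsHall {G : Type*} [Group G] (π : Set ℕ) (H : Subgroup G) : Prop :=
  (∀ p : ℕ, p.Prime → p ∣ Nat.card H → p ∈ π) ∧
  (∀ p : ℕ, p.Prime → p ∣ H.index → p ∉ π)

theorem stmt1 {G : Type*} [Group G] [Finite G] (π : Set ℕ) (A H : Subgroup G)
    (hA : A.Normal) (hH : IsHall π H) :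
    IsHall π (H.subgroupOf A) := by
  obtain ⟨h1, h2⟩ := hH
  constructor
  · intro p hp hdvd
    apply h1 p hp
    have hcard : Nat.card (H.subgroupOf A) = Nat.card (H ⊓ A : Subgroup G) := by
      rw [← Subgroup.inf_subgroupOf_right]
      exact Nat.card_congr (Subgroup.subgroupOfEquivOfLe inf_le_right).toEquiv
    exact hdvd.trans (hcard ▸ Subgroup.card_dvd_of_le inf_le_left)
  · intro p hp hdvd
    apply h2 p hp
    have hrel : (H.subgroupOf A).index = H.relIndex A := rfl
    -- key: H.relIndex A = H.relIndex (H ⊔ A)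
    have e1 : (H ⊓ A).relIndex A * A.relIndex (H ⊔ A) = (H ⊓ A).relIndex (H ⊔ A) :=
      Subgroup.relIndex_mul_relIndex _ _ _ inf_le_right le_sup_right
    have e2 : (H ⊓ A).relIndex H * H.relIndex (H ⊔ A) = (H ⊓ A).relIndex (H ⊔ A) :=
      Subgroup.relIndex_mul_relIndex _ _ _ inf_le_left le_sup_left
    rw [Subgroup.inf_relIndex_right] at e1
    rw [Subgroup.inf_relIndex_left] at e2
    rw [Subgroup.relIndex_sup_right] at e1
    have hne : A.relIndex H ≠ 0 := Subgroup.FiniteIndex.index_ne_zero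
    have key : H.relIndex A = H.relIndex (H ⊔ A) := by
      have := e1.trans e2.symm
      rw [mul_comm (A.relIndex H)] at this
      exact Nat.eq_of_mul_eq_mul_right (Nat.pos_of_ne_zero hne) this
    rw [hrel, key] at hdvd
    exact hdvd.trans (Subgroup.relIndex_dvd_index_of_le le_sup_left)
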